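/- The Newton product is associative: for all sequences a, b, c : ℕ → R, (a ⊠ b) ⊠ c = a ⊠ (b ⊠ c). -/

import Mathlib

open Finset

def newton {R : Type*} [CommRing R] (a b : ℕ → R) : ℕ → R :=
  fun n => ∑ i ∈ Finset.range (n + 1), ∑ j ∈ Finset.range (i + 1),
    (n.choose i : R) * (i.choose j : R) * a i * b (n - j)

private lemma newton_chainN (n m i : ℕ) (h : i ≤ m) :
    n.choose m * m.choose i = n.choose i * (n - i).choose (m - i) := by
  rcases le_or_gt m n with hm | hm
  · exact Nat.choose_mul h
  · have h1 : n.choose m = 0 := Nat.choose_eq_zero_of_lt hm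
    rcases le_or_gt i n with hin | hin
    · have h2 : (n - i).choose (m - i) = 0 := Nat.choose_eq_zero_of_lt (by omega)
      simp [h1, h2]
    · have h3 : n.choose i = 0 := Nat.choose_eq_zero_of_lt hin
      simp [h1, h3]

private lemma newton_vand (n i k : ℕ) (hi : i ≤ n) :
    ∑ j ∈ range (n+1), n.choose (j+k) * ((j+k).choose i * i.choose j)
      = n.choose i * n.choose k := by
  have hL1 : ∑ j ∈ range (n+1), n.choose (j+k) * ((j+k).choose i * i.choose j)
      = ∑ j ∈ range (i+1), n.choose (j+k) * ((j+k).choose i * i.choose j) := by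
    refine (Finset.sum_subset (Finset.range_subset_range.mpr (by omega)) ?_).symm
    intro x _ hx
    simp only [mem_range, not_lt] at hx
    rw [Nat.choose_eq_zero_of_lt (by omega : i < x)]
    ring
  rw [hL1, ← Finset.sum_range_reflect]
  have hR : n.choose k = ∑ l ∈ range (k+1), i.choose l * (n-i).choose (k-l) := by
    conv_lhs => rw [show n = i + (n - i) by omega]
    rw [Nat.add_choose_eq, Finset.Nat.sum_antidiagonal_eq_sum_range_succ_mk]
  rw [hR, Finset.mul_sum]
  set M := min i k with hM
  have hL2 : ∑ l ∈ range (i+1),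
      n.choose ((i+1-1-l)+k) * (((i+1-1-l)+k).choose i * i.choose (i+1-1-l))
      = ∑ l ∈ range (M+1),
      n.choose ((i-l)+k) * (((i-l)+k).choose i * i.choose (i-l)) := by
    refine (Finset.sum_subset (Finset.range_subset_range.mpr (by omega)) ?_).symm
    · intro x hx hx2
      simp only [mem_range, not_lt] at hx hx2
      rw [Nat.choose_eq_zero_of_lt (show (i+1-1-x)+k < i by omega)]
      ring
  rw [hL2]
  have hR2 : ∑ l ∈ range (k+1), n.choose i * (i.choose l * (n-i).choose (k-l))
      = ∑ l ∈ range (M+1), n.choose i * (i.choose l * (n-i).choose (k-l)) := by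
    refine (Finset.sum_subset (Finset.range_subset_range.mpr (by omega)) ?_).symm
    intro x hx hx2
    simp only [mem_range, not_lt] at hx hx2
    rw [Nat.choose_eq_zero_of_lt (show i < x by omega)]
    ring
  rw [hR2]
  refine Finset.sum_congr rfl ?_
  intro l hl
  simp only [mem_range] at hl
  have hli : l ≤ i := by omega
  have hlk : l ≤ k := by omega
  have hc := newton_chainN n ((i-l)+k) i (by omega)
  rw [show ((i-l)+k) - i = k - l by omega] at hc
  rw [Nat.choose_symm hli, ← mul_assoc, hc]
  ring

/-- The binomial transform. -/
private def newtonT {R : Type*} [CommRing R] (a : ℕ → R) : ℕ → R :=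
  fun n => ∑ k ∈ range (n+1), (n.choose k : R) * a k

private lemma newton_reindex {M : Type*} [AddCommMonoid M] (n : ℕ) (F : ℕ → ℕ → M)
    (h0 : ∀ m j, j > m → F m j = 0) (h1 : ∀ m j, m > n → F m j = 0) :
    ∑ m ∈ range (n+1), ∑ j ∈ range (n+1), F m j
      = ∑ j ∈ range (n+1), ∑ k ∈ range (n+1), F (j+k) j := by
  rw [← Finset.sum_product', ← Finset.sum_product']
  have hL : ∑ p ∈ range (n+1) ×ˢ range (n+1), F p.1 p.2
      = ∑ p ∈ (range (n+1) ×ˢ range (n+1)).filter (fun p => p.2 ≤ p.1), F p.1 p.2 :=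
    (Finset.sum_filter_of_ne
      (fun p _ hp => by by_contra h; exact hp (h0 p.1 p.2 (by omega)))).symm
  have hRR : ∑ p ∈ range (n+1) ×ˢ range (n+1), F (p.1+p.2) p.1
      = ∑ p ∈ (range (n+1) ×ˢ range (n+1)).filter (fun p => p.1 + p.2 ≤ n),
          F (p.1+p.2) p.1 :=
    (Finset.sum_filter_of_ne
      (fun p _ hp => by by_contra h; exact hp (h1 (p.1+p.2) p.1 (by omega)))).symm
  rw [hL, hRR]
  refine Finset.sum_nbij' (fun p => (p.2, p.1 - p.2)) (fun p => (p.1 + p.2, p.1)) ?_ ?_ ?_ ?_ ?_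
  · intro p hp
    simp only [mem_filter, mem_product, mem_range] at hp ⊢
    omega
  · intro p hp
    simp only [mem_filter, mem_product, mem_range] at hp ⊢
    omega
  · intro p hp
    simp only [mem_filter, mem_product, mem_range] at hp
    dsimp only
    exact Prod.ext_iff.mpr ⟨by omega, rfl⟩
  · intro p hp
    simp only [mem_filter, mem_product, mem_range] at hp
    dsimp only
    exact Prod.ext_iff.mpr ⟨rfl, by omega⟩
  · intro p hp
    simp only [mem_filter, mem_product, mem_range] at hp
    have : p.2 + (p.1 - p.2) = p.1 := by omega
    rw [this]

private lemma newtonT_mul {R : Type*} [CommRing R] (a b : ℕ → R) (n : ℕ) :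
    newtonT (newton a b) n = newtonT a n * newtonT b n := by
  have hnb : ∀ m ∈ range (n+1), (n.choose m : R) * newton a b m
      = ∑ i ∈ range (n+1), ∑ j ∈ range (n+1),
          (n.choose m : R) * (m.choose i : R) * (i.choose j : R) * a i * b (m-j) := by
    intro m hm
    simp only [mem_range] at hm
    rw [newton, Finset.mul_sum]
    have hstep : ∀ i ∈ range (m+1),
        (n.choose m : R) * ∑ j ∈ range (i+1),
            (m.choose i : R) * (i.choose j : R) * a i * b (m-j)
        = ∑ j ∈ range (n+1),
            (n.choose m : R) * (m.choose i : R) * (i.choose j : R) * a i * b (m-j) := by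
      intro i hi
      simp only [mem_range] at hi
      rw [Finset.mul_sum]
      have hflat : ∀ j ∈ range (i+1),
          (n.choose m : R) * ((m.choose i : R) * (i.choose j : R) * a i * b (m-j))
          = (n.choose m : R) * (m.choose i : R) * (i.choose j : R) * a i * b (m-j) :=
        fun j _ => by ring
      rw [Finset.sum_congr rfl hflat]
      have hsub : range (i+1) ⊆ range (n+1) := Finset.range_subset_range.mpr (by omega)
      refine Finset.sum_subset hsub ?_
      intro x _ hx
      simp only [mem_range, not_lt] at hx
      rw [Nat.choose_eq_zero_of_lt (by omega : i < x)]
      push_cast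
      ring
    rw [Finset.sum_congr rfl hstep]
    refine Finset.sum_subset (Finset.range_subset_range.mpr (by omega)) ?_
    intro x _ hx
    simp only [mem_range, not_lt] at hx
    refine Finset.sum_eq_zero fun j _ => ?_
    rw [Nat.choose_eq_zero_of_lt (by omega : m < x)]
    push_cast
    ring
  rw [newtonT, Finset.sum_congr rfl hnb, Finset.sum_comm]
  have hre : ∀ i ∈ range (n+1),
      ∑ m ∈ range (n+1), ∑ j ∈ range (n+1),
        (n.choose m : R) * (m.choose i : R) * (i.choose j : R) * a i * b (m-j)
      = ∑ j ∈ range (n+1), ∑ k ∈ range (n+1),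
        (n.choose (j+k) : R) * ((j+k).choose i : R) * (i.choose j : R) * a i * b k := by
    intro i hi
    rw [newton_reindex n (fun m j =>
        (n.choose m : R) * (m.choose i : R) * (i.choose j : R) * a i * b (m-j))
      (fun m j hmj => ?_) (fun m j hmn => ?_)]
    · refine Finset.sum_congr rfl fun j _ => Finset.sum_congr rfl fun k _ => ?_
      rw [Nat.add_sub_cancel_left]
    · by_cases him : i ≤ m
      · simp [Nat.choose_eq_zero_of_lt (by omega : i < j)]
      · simp [Nat.choose_eq_zero_of_lt (by omega : m < i)]
    · simp [Nat.choose_eq_zero_of_lt (by omega : n < m)]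
  rw [Finset.sum_congr rfl hre]
  have hfin : ∀ i ∈ range (n+1),
      ∑ j ∈ range (n+1), ∑ k ∈ range (n+1),
        (n.choose (j+k) : R) * ((j+k).choose i : R) * (i.choose j : R) * a i * b k
      = ∑ k ∈ range (n+1), ((n.choose i : R) * a i) * ((n.choose k : R) * b k) := by
    intro i hi
    simp only [mem_range] at hi
    rw [Finset.sum_comm]
    refine Finset.sum_congr rfl fun k _ => ?_
    rw [← Finset.sum_mul, ← Finset.sum_mul]
    have : ∑ j ∈ range (n+1), (n.choose (j+k) : R) * ((j+k).choose i : R) * (i.choose j : R)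
        = ((n.choose i * n.choose k : ℕ) : R) := by
      rw [← newton_vand n i k (by omega)]
      push_cast
      exact Finset.sum_congr rfl fun x _ => by ring
    rw [this]
    push_cast
    ring
  rw [Finset.sum_congr rfl hfin, ← Finset.sum_mul_sum]
  rfl

private lemma newtonT_inj {R : Type*} [CommRing R] (a b : ℕ → R)
    (h : ∀ n, newtonT a n = newtonT b n) : a = b := by
  funext n
  induction n using Nat.strong_induction_on with
  | _ n ih =>
    have h1 := h n
    simp only [newtonT] at h1
    rw [Finset.sum_range_succ, Finset.sum_range_succ] at h1
    have h2 : ∑ k ∈ range n, (n.choose k : R) * a k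
        = ∑ k ∈ range n, (n.choose k : R) * b k :=
      Finset.sum_congr rfl fun k hk => by rw [ih k (mem_range.mp hk)]
    rw [h2, Nat.choose_self] at h1
    simpa using h1

theorem newton_assoc {R : Type*} [CommRing R] (a b c : ℕ → R) :
    newton (newton a b) c = newton a (newton b c) := by
  apply newtonT_inj
  intro n
  rw [newtonT_mul, newtonT_mul, newtonT_mul, newtonT_mul, mul_assoc]
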